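/- Let d ≥ 3 and let p_1, …, p_{2d+2} be vectors in ℝ^(d+1) such that every d+1 of them are linearly independent (span ℝ^(d+1)). Partition the index set into d classes: C_1 = {1,2,3}, C_2 = {4,5,6}, and C_k = {2k+1, 2k+2} for 3 ≤ k ≤ d. Then there exists a nonzero α ∈ ℝ^(d+1) such that, with h⁺ = {x : ⟨α,x⟩ > 0} and h⁻ = {x : ⟨α,x⟩ < 0}, each of h⁺ and h⁻ contains at least 2 of the points p_1, …, p_{2d+2}, and each of h⁺ and h⁻ contains at most one point from each class C_i (1 ≤ i ≤ d). -/

import Mathlib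

/-- Class index (0-based) of the `j`-th vector (0-based): `C_1 = {1,2,3}` has indices
`0,1,2`, `C_2 = {4,5,6}` has indices `3,4,5`, and `C_k = {2k+1, 2k+2}` has indices
`2k, 2k+1` for `3 ≤ k ≤ d`. -/
def classIdx (j : ℕ) : ℕ := if j < 3 then 0 else if j < 6 then 1 else j / 2 - 1

open Finset

open Finset

/-! ### median of three reals -/

noncomputable def med3 (x y z : ℝ) : ℝ := min (max x y) (min (max y z) (max z x))

def NoTwo (X Y Z : ℝ) : Prop :=
  (¬(0 < X ∧ 0 < Y) ∧ ¬(0 < Y ∧ 0 < Z) ∧ ¬(0 < X ∧ 0 < Z)) ∧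
  (¬(X < 0 ∧ Y < 0) ∧ ¬(Y < 0 ∧ Z < 0) ∧ ¬(X < 0 ∧ Z < 0))

lemma med3_pos_iff {x y z : ℝ} :
    0 < med3 x y z ↔ (0 < x ∧ 0 < y) ∨ (0 < y ∧ 0 < z) ∨ (0 < x ∧ 0 < z) := by
  unfold med3
  simp only [lt_min_iff, lt_max_iff]
  tauto

lemma med3_neg_iff {x y z : ℝ} :
    med3 x y z < 0 ↔ (x < 0 ∧ y < 0) ∨ (y < 0 ∧ z < 0) ∨ (x < 0 ∧ z < 0) := by
  unfold med3
  simp only [min_lt_iff, max_lt_iff]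
  tauto

lemma noTwo_of_med3_eq_zero {x y z : ℝ} (h : med3 x y z = 0) : NoTwo x y z := by
  constructor
  · refine ⟨?_, ?_, ?_⟩ <;> rintro ⟨h1, h2⟩ <;>
      (have : 0 < med3 x y z := med3_pos_iff.2 (by tauto)) <;> linarith
  · refine ⟨?_, ?_, ?_⟩ <;> rintro ⟨h1, h2⟩ <;>
      (have : med3 x y z < 0 := med3_neg_iff.2 (by tauto)) <;> linarith

lemma noTwo_of_zero_mul {x y z : ℝ}
    (h : (x = 0 ∧ y * z ≤ 0) ∨ (y = 0 ∧ x * z ≤ 0) ∨ (z = 0 ∧ x * y ≤ 0)) :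
    NoTwo x y z := by
  rcases h with ⟨h0, hp⟩ | ⟨h0, hp⟩ | ⟨h0, hp⟩ <;>
    refine ⟨⟨?_, ?_, ?_⟩, ?_, ?_, ?_⟩ <;> rintro ⟨h1, h2⟩ <;> nlinarith

lemma med3_continuous {F G H : ℝ → ℝ} (hF : Continuous F) (hG : Continuous G)
    (hH : Continuous H) : Continuous fun t => med3 (F t) (G t) (H t) :=
  (hF.max hG).min ((hG.max hH).min (hH.max hF))

/-- IVT step: an "odd path" on which the median of three continuous functions
must vanish somewhere. -/
lemma exists_med3_zero {F G H : ℝ → ℝ} (hF : Continuous F) (hG : Continuous G)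
    (hH : Continuous H) (T : ℝ) (hT : 0 ≤ T)
    (hFe : F T = -F 0) (hGe : G T = -G 0) (hHe : H T = -H 0) :
    ∃ t ∈ Set.Icc 0 T, med3 (F t) (G t) (H t) = 0 := by
  set h := fun t => med3 (F t) (G t) (H t) with hh
  have hc : Continuous h := med3_continuous hF hG hH
  have key : (0 : ℝ) ∈ Set.uIcc (h 0) (h T) := by
    rcases lt_trichotomy (h 0) 0 with h0 | h0 | h0
    · have h2 : 0 < h T := by
        rw [hh] at h0 ⊢
        simp only [hFe, hGe, hHe]
        rcases med3_neg_iff.1 h0 with ⟨a, b⟩ | ⟨a, b⟩ | ⟨a, b⟩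
        · exact med3_pos_iff.2 (Or.inl ⟨by linarith, by linarith⟩)
        · exact med3_pos_iff.2 (Or.inr (Or.inl ⟨by linarith, by linarith⟩))
        · exact med3_pos_iff.2 (Or.inr (Or.inr ⟨by linarith, by linarith⟩))
      exact Set.mem_uIcc.2 (Or.inl ⟨le_of_lt h0, le_of_lt h2⟩)
    · rw [h0]; exact Set.left_mem_uIcc
    · have h2 : h T < 0 := by
        rw [hh] at h0 ⊢
        simp only [hFe, hGe, hHe]
        rcases med3_pos_iff.1 h0 with ⟨a, b⟩ | ⟨a, b⟩ | ⟨a, b⟩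
        · exact med3_neg_iff.2 (Or.inl ⟨by linarith, by linarith⟩)
        · exact med3_neg_iff.2 (Or.inr (Or.inl ⟨by linarith, by linarith⟩))
        · exact med3_neg_iff.2 (Or.inr (Or.inr ⟨by linarith, by linarith⟩))
      exact Set.mem_uIcc.2 (Or.inr ⟨le_of_lt h2, le_of_lt h0⟩)
  have := intermediate_value_uIcc (hc.continuousOn (s := Set.uIcc 0 T))
  obtain ⟨t, ht, hval⟩ := this key
  rw [Set.uIcc_of_le hT] at ht
  exact ⟨t, ht, hval⟩
open Finset

/-! ### the pairing `bl` -/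

abbrev Eu (n : ℕ) := EuclideanSpace ℝ (Fin n)

noncomputable def bl (n : ℕ) : Eu n →ₗ[ℝ] Eu n →ₗ[ℝ] ℝ :=
  LinearMap.mk₂ ℝ (fun a b => ∑ k, a k * b k)
    (fun a a' b => by
      simp only [PiLp.add_apply, add_mul, Finset.sum_add_distrib])
    (fun r a b => by
      simp only [PiLp.smul_apply, smul_eq_mul, Finset.mul_sum, mul_assoc])
    (fun a b b' => by
      simp only [PiLp.add_apply, mul_add, Finset.sum_add_distrib])
    (fun r a b => by
      simp only [PiLp.smul_apply, smul_eq_mul, Finset.mul_sum]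
      exact Finset.sum_congr rfl fun k _ => by ring)

lemma bl_apply {n : ℕ} (a b : Eu n) : bl n a b = ∑ k, a k * b k := rfl

lemma bl_comb3 {n : ℕ} (x y z : ℝ) (u v w b : Eu n) :
    bl n (x • u + y • v + z • w) b = x * bl n u b + y * bl n v b + z * bl n w b := by
  simp only [map_add, map_smul, LinearMap.add_apply, LinearMap.smul_apply, smul_eq_mul]

lemma bl_comb2 {n : ℕ} (x y : ℝ) (u v b : Eu n) :
    bl n (x • u + y • v) b = x * bl n u b + y * bl n v b := by
  simp only [map_add, map_smul, LinearMap.add_apply, LinearMap.smul_apply, smul_eq_mul]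

lemma bl_self_pos {n : ℕ} {a : Eu n} (ha : a ≠ 0) : 0 < bl n a a := by
  rw [bl_apply]
  have hex : ∃ k, a k ≠ 0 := by
    by_contra hall
    push_neg at hall
    exact ha (by ext k; simpa using hall k)
  obtain ⟨k0, hk0⟩ := hex
  refine Finset.sum_pos' (fun k _ => mul_self_nonneg _) ⟨k0, Finset.mem_univ _, ?_⟩
  exact mul_self_pos.2 hk0

/-! ### the hexagonal path in coordinates -/

noncomputable def hxf (t : ℝ) : ℝ := max (min 1 (3 - t)) (min 0 (5 - t))
noncomputable def hyf (t : ℝ) : ℝ := min 0 (max (-1) (max (1 - t) (t - 5)))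
noncomputable def hzf (t : ℝ) : ℝ := hxf (6 - t)

lemma hxf_cont : Continuous hxf := by
  unfold hxf
  exact ((continuous_const.min (continuous_const.sub continuous_id)).max
    (continuous_const.min (continuous_const.sub continuous_id)))

lemma hyf_cont : Continuous hyf := by
  unfold hyf
  exact continuous_const.min (continuous_const.max
    ((continuous_const.sub continuous_id).max ((continuous_id.sub continuous_const))))

lemma hzf_cont : Continuous hzf := hxf_cont.comp (continuous_const.sub continuous_id)

lemma hxf_hi {t : ℝ} (h : t ≤ 2) : hxf t = 1 := by
  unfold hxf
  rw [min_eq_left (by linarith), min_eq_left (by linarith), max_eq_left (by linarith)]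

lemma hxf_mid {t : ℝ} (h2 : 2 ≤ t) (h3 : t ≤ 3) : hxf t = 3 - t := by
  unfold hxf
  rw [min_eq_right (by linarith), min_eq_left (by linarith), max_eq_left (by linarith)]

lemma hxf_z {t : ℝ} (h3 : 3 ≤ t) (h5 : t ≤ 5) : hxf t = 0 := by
  unfold hxf
  rw [min_eq_right (by linarith), min_eq_left (by linarith), max_eq_right (by linarith)]

lemma hxf_lo {t : ℝ} (h5 : 5 ≤ t) : hxf t = 5 - t := by
  unfold hxf
  rw [min_eq_right (by linarith), min_eq_right (by linarith), max_eq_right (by linarith)]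

lemma hyf_z1 {t : ℝ} (h0 : 0 ≤ t) (h1 : t ≤ 1) : hyf t = 0 := by
  unfold hyf
  rw [max_eq_left (show t - 5 ≤ 1 - t by linarith),
    max_eq_right (show (-1 : ℝ) ≤ 1 - t by linarith),
    min_eq_left (show (0 : ℝ) ≤ 1 - t by linarith)]

lemma hyf_down {t : ℝ} (h1 : 1 ≤ t) (h2 : t ≤ 2) : hyf t = 1 - t := by
  unfold hyf
  rw [max_eq_left (show t - 5 ≤ 1 - t by linarith),
    max_eq_right (show (-1 : ℝ) ≤ 1 - t by linarith),
    min_eq_right (show 1 - t ≤ (0 : ℝ) by linarith)]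

lemma hyf_neg1 {t : ℝ} (h2 : 2 ≤ t) (h4 : t ≤ 4) : hyf t = -1 := by
  unfold hyf
  rcases le_total t 3 with h | h
  · rw [max_eq_left (show t - 5 ≤ 1 - t by linarith),
      max_eq_left (show 1 - t ≤ (-1 : ℝ) by linarith),
      min_eq_right (show (-1 : ℝ) ≤ (0 : ℝ) by norm_num)]
  · rw [max_eq_right (show 1 - t ≤ t - 5 by linarith),
      max_eq_left (show t - 5 ≤ (-1 : ℝ) by linarith),
      min_eq_right (show (-1 : ℝ) ≤ (0 : ℝ) by norm_num)]

lemma hyf_up {t : ℝ} (h4 : 4 ≤ t) (h5 : t ≤ 5) : hyf t = t - 5 := by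
  unfold hyf
  rw [max_eq_right (show 1 - t ≤ t - 5 by linarith),
    max_eq_right (show (-1 : ℝ) ≤ t - 5 by linarith),
    min_eq_right (show t - 5 ≤ (0 : ℝ) by linarith)]

lemma hyf_z2 {t : ℝ} (h5 : 5 ≤ t) (h6 : t ≤ 6) : hyf t = 0 := by
  unfold hyf
  rw [max_eq_right (show 1 - t ≤ t - 5 by linarith),
    max_eq_right (show (-1 : ℝ) ≤ t - 5 by linarith),
    min_eq_left (show (0 : ℝ) ≤ t - 5 by linarith)]

lemma hex_start : hxf 0 = 1 ∧ hyf 0 = 0 ∧ hzf 0 = -1 := by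
  refine ⟨hxf_hi (by norm_num), hyf_z1 le_rfl (by norm_num), ?_⟩
  have h : hzf 0 = hxf 6 := by unfold hzf; norm_num
  rw [h, hxf_lo (by norm_num)]; norm_num

lemma hex_end : hxf 6 = -1 ∧ hyf 6 = 0 ∧ hzf 6 = 1 := by
  refine ⟨?_, hyf_z2 (by norm_num) le_rfl, ?_⟩
  · rw [hxf_lo (by norm_num)]; norm_num
  · have h : hzf 6 = hxf 0 := by unfold hzf; norm_num
    rw [h, hxf_hi (by norm_num)]

lemma hexagon_cases {t : ℝ} (h0 : 0 ≤ t) (h6 : t ≤ 6) :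
    ((hyf t = 0 ∧ hxf t * hzf t ≤ 0) ∨ (hzf t = 0 ∧ hxf t * hyf t ≤ 0) ∨
      (hxf t = 0 ∧ hyf t * hzf t ≤ 0)) ∧
    (hxf t = 1 ∨ hyf t = -1 ∨ hzf t = 1) := by
  have hz0 : hzf t = hxf (6 - t) := rfl
  rcases le_total t 1 with h | h1
  · rw [hxf_hi (by linarith), hyf_z1 h0 h, hz0, hxf_lo (by linarith)]
    exact ⟨Or.inl ⟨rfl, by nlinarith⟩, Or.inl rfl⟩
  rcases le_total t 2 with h | h2
  · rw [hxf_hi (by linarith), hyf_down h1 h, hz0, hxf_z (by linarith) (by linarith)]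
    exact ⟨Or.inr (Or.inl ⟨rfl, by nlinarith⟩), Or.inl rfl⟩
  rcases le_total t 3 with h | h3
  · rw [hxf_mid h2 h, hyf_neg1 h2 (by linarith), hz0, hxf_z (by linarith) (by linarith)]
    exact ⟨Or.inr (Or.inl ⟨rfl, by nlinarith⟩), Or.inr (Or.inl rfl)⟩
  rcases le_total t 4 with h | h4
  · rw [hxf_z h3 (by linarith), hyf_neg1 (by linarith) h, hz0,
      hxf_mid (by linarith) (by linarith)]
    exact ⟨Or.inr (Or.inr ⟨rfl, by nlinarith⟩), Or.inr (Or.inl rfl)⟩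
  rcases le_total t 5 with h | h5
  · rw [hxf_z (by linarith) h, hyf_up h4 h, hz0, hxf_hi (by linarith)]
    exact ⟨Or.inr (Or.inr ⟨rfl, by nlinarith⟩), Or.inr (Or.inr rfl)⟩
  · rw [hxf_lo h5, hyf_z2 h5 h6, hz0, hxf_hi (by linarith)]
    exact ⟨Or.inl ⟨rfl, by nlinarith⟩, Or.inr (Or.inr rfl)⟩
/-! ### sign-analysis helpers -/

lemma prod_le_zero {cj ck X Y : ℝ} (hsgn : 0 ≤ cj * ck) (hnz : cj ≠ 0 ∨ ck ≠ 0)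
    (h : cj * X + ck * Y = 0) : X * Y ≤ 0 := by
  by_contra hp
  push_neg at hp
  rcases hsgn.lt_or_eq with hlt | heq
  · rcases mul_pos_iff.1 hlt with ⟨h1, h2⟩ | ⟨h1, h2⟩ <;>
      rcases mul_pos_iff.1 hp with ⟨h3, h4⟩ | ⟨h3, h4⟩ <;> nlinarith
  · rcases mul_eq_zero.1 heq.symm with h0 | h0
    · rcases hnz with hne | hne
      · exact hne h0
      · have hY : Y = 0 := by
          have : ck * Y = 0 := by rw [h0] at h; linarith
          exact (mul_eq_zero.1 this).resolve_left hne
        rw [hY, mul_zero] at hp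
        exact lt_irrefl _ hp
    · rcases hnz with hne | hne
      · have hX : X = 0 := by
          have : cj * X = 0 := by rw [h0] at h; linarith
          exact (mul_eq_zero.1 this).resolve_left hne
        rw [hX, zero_mul] at hp
        exact lt_irrefl _ hp
      · exact hne h0

lemma pick {c₀ c₁ c₂ : ℝ} (h : ¬(c₀ = 0 ∧ c₁ = 0 ∧ c₂ = 0)) :
    (0 ≤ c₁ * c₂ ∧ (c₁ ≠ 0 ∨ c₂ ≠ 0)) ∨ (0 ≤ c₀ * c₂ ∧ (c₀ ≠ 0 ∨ c₂ ≠ 0)) ∨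
      (0 ≤ c₀ * c₁ ∧ (c₀ ≠ 0 ∨ c₁ ≠ 0)) := by
  rcases lt_trichotomy c₁ 0 with h1 | h1 | h1 <;> rcases lt_trichotomy c₂ 0 with h2 | h2 | h2
  · exact Or.inl ⟨by nlinarith, Or.inl (ne_of_lt h1)⟩
  · exact Or.inl ⟨by simp [h2], Or.inl (ne_of_lt h1)⟩
  · -- c₁ < 0 < c₂
    rcases lt_trichotomy c₀ 0 with h0 | h0 | h0
    · exact Or.inr (Or.inr ⟨by nlinarith, Or.inl (ne_of_lt h0)⟩)
    · exact Or.inr (Or.inl ⟨by simp [h0], Or.inr (ne_of_gt h2)⟩)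
    · exact Or.inr (Or.inl ⟨by nlinarith, Or.inl (ne_of_gt h0)⟩)
  · exact Or.inl ⟨by simp [h1], Or.inr (ne_of_lt h2)⟩
  · -- c₁ = c₂ = 0
    have h0 : c₀ ≠ 0 := fun hc => h ⟨hc, h1, h2⟩
    exact Or.inr (Or.inl ⟨by simp [h2], Or.inl h0⟩)
  · exact Or.inl ⟨by simp [h1], Or.inr (ne_of_gt h2)⟩
  · -- 0 < c₁, c₂ < 0
    rcases lt_trichotomy c₀ 0 with h0 | h0 | h0
    · exact Or.inr (Or.inl ⟨by nlinarith, Or.inl (ne_of_lt h0)⟩)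
    · exact Or.inr (Or.inl ⟨by simp [h0], Or.inr (ne_of_lt h2)⟩)
    · exact Or.inr (Or.inr ⟨by nlinarith, Or.inl (ne_of_gt h0)⟩)
  · exact Or.inl ⟨by simp [h2], Or.inl (ne_of_gt h1)⟩
  · exact Or.inl ⟨by nlinarith, Or.inl (ne_of_gt h1)⟩

/-! ### Case of a linear relation among the second-class forms on `W` -/

lemma case3aux {n : ℕ} (W : Submodule ℝ (Eu n)) (hW : 3 ≤ Module.finrank ℝ W)
    (a₀ a₁ a₂ bi bj bk : Eu n) (cj ck : ℝ)
    (hsgn : 0 ≤ cj * ck) (hnz : cj ≠ 0 ∨ ck ≠ 0)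
    (hrel : ∀ u ∈ W, bl n u bi = 0 → cj * bl n u bj + ck * bl n u bk = 0) :
    ∃ α, α ∈ W ∧ α ≠ 0 ∧ med3 (bl n α a₀) (bl n α a₁) (bl n α a₂) = 0 ∧
      bl n α bi = 0 ∧ bl n α bj * bl n α bk ≤ 0 := by
  classical
  let g : W →ₗ[ℝ] ℝ := ((bl n).flip bi).comp W.subtype
  have hrk : 2 ≤ Module.finrank ℝ (LinearMap.ker g) := by
    have h1 := LinearMap.finrank_range_add_finrank_ker g
    have h2 : Module.finrank ℝ (LinearMap.range g) ≤ 1 := by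
      have := Submodule.finrank_le (LinearMap.range g)
      simpa using this
    omega
  have hKne : LinearMap.ker g ≠ ⊥ := by
    intro hbot
    rw [hbot, finrank_bot] at hrk
    omega
  obtain ⟨u', hu'K, hu'0⟩ := (Submodule.ne_bot_iff _).1 hKne
  have hnotle : ¬(LinearMap.ker g ≤ Submodule.span ℝ {u'}) := by
    intro hle
    have := Submodule.finrank_mono hle
    rw [finrank_span_singleton hu'0] at this
    omega
  obtain ⟨w', hw'K, hw'span⟩ := SetLike.not_le_iff_exists.1 hnotle
  set U : Eu n := (u' : Eu n) with hU
  set V : Eu n := (w' : Eu n) with hV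
  have hU0 : U ≠ 0 := fun h => hu'0 (Subtype.ext h)
  have hUW : U ∈ W := u'.2
  have hVW : V ∈ W := w'.2
  have hUbi : bl n U bi = 0 := hu'K
  have hVbi : bl n V bi = 0 := hw'K
  set γ : ℝ → Eu n := fun t => (1 - 2*t) • U + (4*t*(1-t)) • V with hγ
  have hγW : ∀ t, γ t ∈ W := fun t => W.add_mem (W.smul_mem _ hUW) (W.smul_mem _ hVW)
  have hγbi : ∀ t, bl n (γ t) bi = 0 := by
    intro t
    rw [hγ]
    simp only
    rw [bl_comb2, hUbi, hVbi]
    ring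
  have hγ0 : γ 0 = U := by simp only [hγ]; module
  have hγ1 : γ 1 = -U := by simp only [hγ]; module
  have hγne : ∀ t ∈ Set.Icc (0:ℝ) 1, γ t ≠ 0 := by
    rintro t ⟨ht0, ht1⟩ hzero
    rcases eq_or_ne (4*t*(1-t)) 0 with hs | hs
    · have ht : t = 0 ∨ t = 1 := by
        rcases mul_eq_zero.1 hs with h | h
        · rcases mul_eq_zero.1 h with h' | h'
          · norm_num at h'
          · exact Or.inl h'
        · exact Or.inr (eq_of_sub_eq_zero h).symm
      rcases ht with rfl | rfl
      · rw [hγ0] at hzero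
        exact hU0 hzero
      · rw [hγ1] at hzero
        exact hU0 (by simpa using hzero)
    · apply hw'span
      rw [Submodule.mem_span_singleton]
      have hVeq : (4*t*(1-t)) • V = -((1 - 2*t) • U) := by
        rw [hγ] at hzero
        simp only at hzero
        rw [eq_neg_iff_add_eq_zero, add_comm]
        exact hzero
      refine ⟨-(1 - 2*t) / (4*t*(1-t)), Subtype.coe_injective ?_⟩
      simp only [SetLike.val_smul]
      show (-(1 - 2*t) / (4*t*(1-t))) • U = V
      have hVval : V = (4*t*(1-t))⁻¹ • -((1-2*t) • U) := by
        rw [← hVeq, inv_smul_smul₀ hs]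
      rw [hVval, smul_neg, smul_smul, ← neg_smul]
      congr 1
      field_simp
  -- the path is odd between the endpoints
  have hends : γ 1 = -γ 0 := by rw [hγ0, hγ1]
  set F := fun t => bl n (γ t) a₀ with hF
  set G := fun t => bl n (γ t) a₁ with hG
  set H := fun t => bl n (γ t) a₂ with hH
  have hγcont : Continuous γ := by
    apply Continuous.add
    · exact (continuous_const.sub (continuous_const.mul continuous_id)).smul continuous_const
    · exact ((continuous_const.mul continuous_id).mul
        (continuous_const.sub continuous_id)).smul continuous_const
  have hcont : ∀ b : Eu n, Continuous fun t => bl n (γ t) b := by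
    intro b
    have : (fun t => bl n (γ t) b) = fun t => ((bl n).flip b) (γ t) := rfl
    rw [this]
    exact ((bl n).flip b).continuous_of_finiteDimensional.comp hγcont
  have hFe : F 1 = -F 0 := by rw [hF]; simp only [hends]; rw [map_neg]; simp
  have hGe : G 1 = -G 0 := by rw [hG]; simp only [hends]; rw [map_neg]; simp
  have hHe : H 1 = -H 0 := by rw [hH]; simp only [hends]; rw [map_neg]; simp
  obtain ⟨t, ht, hmed⟩ := exists_med3_zero (hcont a₀) (hcont a₁) (hcont a₂) 1
    (by norm_num) hFe hGe hHe
  refine ⟨γ t, hγW t, hγne t ht, hmed, hγbi t, ?_⟩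
  exact prod_le_zero hsgn hnz (hrel (γ t) (hγW t) (hγbi t))
/-! ### Case where the second-class forms are independent on `W`: hexagon path -/

lemma case2 {n : ℕ} (W : Submodule ℝ (Eu n)) (a₀ a₁ a₂ b₀ b₁ b₂ : Eu n)
    (u₀ u₁ u₂ : Eu n) (hu₀ : u₀ ∈ W) (hu₁ : u₁ ∈ W) (hu₂ : u₂ ∈ W)
    (h00 : bl n u₀ b₀ = 1) (h01 : bl n u₀ b₁ = 0) (h02 : bl n u₀ b₂ = 0)
    (h10 : bl n u₁ b₀ = 0) (h11 : bl n u₁ b₁ = 1) (h12 : bl n u₁ b₂ = 0)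
    (h20 : bl n u₂ b₀ = 0) (h21 : bl n u₂ b₁ = 0) (h22 : bl n u₂ b₂ = 1) :
    ∃ α, α ∈ W ∧ α ≠ 0 ∧ med3 (bl n α a₀) (bl n α a₁) (bl n α a₂) = 0 ∧
      ((bl n α b₀ = 0 ∧ bl n α b₁ * bl n α b₂ ≤ 0) ∨
       (bl n α b₁ = 0 ∧ bl n α b₀ * bl n α b₂ ≤ 0) ∨
       (bl n α b₂ = 0 ∧ bl n α b₀ * bl n α b₁ ≤ 0)) := by
  classical
  set γ : ℝ → Eu n := fun t => hxf t • u₀ + hyf t • u₁ + hzf t • u₂ with hγ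
  have hγW : ∀ t, γ t ∈ W := fun t =>
    W.add_mem (W.add_mem (W.smul_mem _ hu₀) (W.smul_mem _ hu₁)) (W.smul_mem _ hu₂)
  have hγb0 : ∀ t, bl n (γ t) b₀ = hxf t := by
    intro t; rw [hγ]; simp only; rw [bl_comb3, h00, h10, h20]; ring
  have hγb1 : ∀ t, bl n (γ t) b₁ = hyf t := by
    intro t; rw [hγ]; simp only; rw [bl_comb3, h01, h11, h21]; ring
  have hγb2 : ∀ t, bl n (γ t) b₂ = hzf t := by
    intro t; rw [hγ]; simp only; rw [bl_comb3, h02, h12, h22]; ring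
  have hends : γ 6 = -γ 0 := by
    rw [hγ]
    simp only
    rw [hex_start.1, hex_start.2.1, show hzf 0 = -1 from hex_start.2.2,
      hex_end.1, hex_end.2.1, show hzf 6 = 1 from hex_end.2.2]
    module
  have hγcont : Continuous γ := by
    exact ((hxf_cont.smul continuous_const).add (hyf_cont.smul continuous_const)).add
      (hzf_cont.smul continuous_const)
  have hcont : ∀ b : Eu n, Continuous fun t => bl n (γ t) b := by
    intro b
    exact ((bl n).flip b).continuous_of_finiteDimensional.comp hγcont
  have hFe : bl n (γ 6) a₀ = -(bl n (γ 0) a₀) := by rw [hends, map_neg]; simp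
  have hGe : bl n (γ 6) a₁ = -(bl n (γ 0) a₁) := by rw [hends, map_neg]; simp
  have hHe : bl n (γ 6) a₂ = -(bl n (γ 0) a₂) := by rw [hends, map_neg]; simp
  obtain ⟨t, ht, hmed⟩ := exists_med3_zero (hcont a₀) (hcont a₁) (hcont a₂) 6
    (by norm_num) hFe hGe hHe
  obtain ⟨hpat, hcoord⟩ := hexagon_cases ht.1 ht.2
  refine ⟨γ t, hγW t, ?_, hmed, ?_⟩
  · intro hzero
    have hx0 : hxf t = 0 ∧ hyf t = 0 ∧ hzf t = 0 := by
      refine ⟨?_, ?_, ?_⟩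
      · rw [← hγb0 t, hzero]; simp
      · rw [← hγb1 t, hzero]; simp
      · rw [← hγb2 t, hzero]; simp
    rcases hcoord with h | h | h <;> rw [h] at hx0 <;> norm_num at hx0
  · rw [hγb0, hγb1, hγb2]
    tauto
/-! ### classIdx facts -/


lemma classIdx_lt {d j : ℕ} (hd : 3 ≤ d) (hj : j < 2*d+2) : classIdx j < d := by
  unfold classIdx; split_ifs <;> omega

lemma classIdx_eq0 {j : ℕ} : classIdx j = 0 ↔ j < 3 := by
  unfold classIdx; split_ifs <;> first | (simp; omega) | omega

lemma classIdx_eq1 {j : ℕ} : classIdx j = 1 ↔ 3 ≤ j ∧ j < 6 := by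
  unfold classIdx; split_ifs <;> first | (simp; omega) | omega

lemma classIdx_big {j c : ℕ} (hc : 2 ≤ c) : classIdx j = c ↔ j = 2*c+2 ∨ j = 2*c+3 := by
  unfold classIdx; split_ifs <;> first | (simp; omega) | omega

lemma sub3 {m : ℕ} {Q : Fin m → Prop} {i j a b c : Fin m}
    (hi : i = a ∨ i = b ∨ i = c) (hj : j = a ∨ j = b ∨ j = c)
    (Hab : ¬(Q a ∧ Q b)) (Hac : ¬(Q a ∧ Q c)) (Hbc : ¬(Q b ∧ Q c))
    (hQi : Q i) (hQj : Q j) : i = j := by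
  rcases hi with rfl | rfl | rfl <;> rcases hj with rfl | rfl | rfl <;> tauto

lemma sub2 {m : ℕ} {Q : Fin m → Prop} {i j a b : Fin m}
    (hi : i = a ∨ i = b) (hj : j = a ∨ j = b)
    (Hab : ¬(Q a ∧ Q b)) (hQi : Q i) (hQj : Q j) : i = j := by
  rcases hi with rfl | rfl <;> rcases hj with rfl | rfl <;> tauto

lemma fin_lt3 {m : ℕ} (i : Fin m) (hm : 2 < m) (h : i.1 < 3) :
    i = ⟨0, by omega⟩ ∨ i = ⟨1, by omega⟩ ∨ i = ⟨2, by omega⟩ := by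
  rcases (by omega : i.1 = 0 ∨ i.1 = 1 ∨ i.1 = 2) with h' | h' | h'
  exacts [Or.inl (Fin.ext h'), Or.inr (Or.inl (Fin.ext h')), Or.inr (Or.inr (Fin.ext h'))]

lemma fin_36 {m : ℕ} (i : Fin m) (hm : 5 < m) (h3 : 3 ≤ i.1) (h6 : i.1 < 6) :
    i = ⟨3, by omega⟩ ∨ i = ⟨4, by omega⟩ ∨ i = ⟨5, by omega⟩ := by
  rcases (by omega : i.1 = 3 ∨ i.1 = 4 ∨ i.1 = 5) with h' | h' | h'
  exacts [Or.inl (Fin.ext h'), Or.inr (Or.inl (Fin.ext h')), Or.inr (Or.inr (Fin.ext h'))]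

lemma fin_pair {m c : ℕ} (i : Fin m) (h1 : 2*c+2 < m) (h2 : 2*c+3 < m)
    (h : i.1 = 2*c+2 ∨ i.1 = 2*c+3) :
    i = ⟨2*c+2, h1⟩ ∨ i = ⟨2*c+3, h2⟩ := by
  rcases h with h' | h'
  exacts [Or.inl (Fin.ext h'), Or.inr (Fin.ext h')]

/-! ### assembling the conclusion -/

lemma assemble (d : ℕ) (hd : 3 ≤ d)
    (p : Fin (2 * d + 2) → EuclideanSpace ℝ (Fin (d + 1)))
    (hgen : ∀ s : Finset (Fin (2 * d + 2)), s.card = d + 1 →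
      LinearIndependent ℝ (fun i : s => p i.1))
    (α : Eu (d+1)) (hα0 : α ≠ 0)
    (hpair : ∀ (c : ℕ) (h1 : 2*c+2 < 2*d+2) (h2 : 2*c+3 < 2*d+2), 2 ≤ c → c < d →
      bl (d+1) α (p ⟨2*c+2, h1⟩) + bl (d+1) α (p ⟨2*c+3, h2⟩) = 0)
    (hA : NoTwo (bl (d+1) α (p ⟨0, by omega⟩)) (bl (d+1) α (p ⟨1, by omega⟩))
      (bl (d+1) α (p ⟨2, by omega⟩)))
    (hB : NoTwo (bl (d+1) α (p ⟨3, by omega⟩)) (bl (d+1) α (p ⟨4, by omega⟩))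
      (bl (d+1) α (p ⟨5, by omega⟩))) :
    ∃ β : EuclideanSpace ℝ (Fin (d + 1)), β ≠ 0 ∧
      2 ≤ {i : Fin (2 * d + 2) | 0 < ∑ k, β k * p i k}.ncard ∧
      2 ≤ {i : Fin (2 * d + 2) | ∑ k, β k * p i k < 0}.ncard ∧
      (∀ c < d,
        {i : Fin (2 * d + 2) | classIdx (i : ℕ) = c ∧ 0 < ∑ k, β k * p i k}.ncard ≤ 1) ∧
      (∀ c < d,
        {i : Fin (2 * d + 2) | classIdx (i : ℕ) = c ∧ ∑ k, β k * p i k < 0}.ncard ≤ 1) := by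
  classical
  set v : Fin (2*d+2) → ℝ := fun i => bl (d+1) α (p i) with hvdef
  have key_pos : ∀ c : ℕ, c < d → ∀ i j : Fin (2*d+2),
      classIdx i.1 = c → 0 < v i → classIdx j.1 = c → 0 < v j → i = j := by
    intro c hc i j hci hvi hcj hvj
    rcases Nat.lt_or_ge c 2 with h2 | h2
    · rcases (by omega : c = 0 ∨ c = 1) with rfl | rfl
      · have hi := fin_lt3 i (by omega) (classIdx_eq0.1 hci)
        have hj := fin_lt3 j (by omega) (classIdx_eq0.1 hcj)
        exact sub3 (Q := fun k => 0 < v k) hi hj hA.1.1 hA.1.2.2 hA.1.2.1 hvi hvj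
      · have hi := fin_36 i (by omega) (classIdx_eq1.1 hci).1 (classIdx_eq1.1 hci).2
        have hj := fin_36 j (by omega) (classIdx_eq1.1 hcj).1 (classIdx_eq1.1 hcj).2
        exact sub3 (Q := fun k => 0 < v k) hi hj hB.1.1 hB.1.2.2 hB.1.2.1 hvi hvj
    · have hi := fin_pair i (by omega) (by omega) ((classIdx_big h2).1 hci)
      have hj := fin_pair j (by omega) (by omega) ((classIdx_big h2).1 hcj)
      refine sub2 (Q := fun k => 0 < v k) hi hj ?_ hvi hvj
      rintro ⟨x, y⟩
      have := hpair c (by omega) (by omega) h2 hc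
      rw [hvdef] at x y
      simp only at x y
      linarith
  have key_neg : ∀ c : ℕ, c < d → ∀ i j : Fin (2*d+2),
      classIdx i.1 = c → v i < 0 → classIdx j.1 = c → v j < 0 → i = j := by
    intro c hc i j hci hvi hcj hvj
    rcases Nat.lt_or_ge c 2 with h2 | h2
    · rcases (by omega : c = 0 ∨ c = 1) with rfl | rfl
      · have hi := fin_lt3 i (by omega) (classIdx_eq0.1 hci)
        have hj := fin_lt3 j (by omega) (classIdx_eq0.1 hcj)
        exact sub3 (Q := fun k => v k < 0) hi hj hA.2.1 hA.2.2.2 hA.2.2.1 hvi hvj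
      · have hi := fin_36 i (by omega) (classIdx_eq1.1 hci).1 (classIdx_eq1.1 hci).2
        have hj := fin_36 j (by omega) (classIdx_eq1.1 hcj).1 (classIdx_eq1.1 hcj).2
        exact sub3 (Q := fun k => v k < 0) hi hj hB.2.1 hB.2.2.2 hB.2.2.1 hvi hvj
    · have hi := fin_pair i (by omega) (by omega) ((classIdx_big h2).1 hci)
      have hj := fin_pair j (by omega) (by omega) ((classIdx_big h2).1 hcj)
      refine sub2 (Q := fun k => v k < 0) hi hj ?_ hvi hvj
      rintro ⟨x, y⟩
      have := hpair c (by omega) (by omega) h2 hc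
      rw [hvdef] at x y
      simp only at x y
      linarith
  set Fp : Finset (Fin (2*d+2)) := Finset.univ.filter (fun i => 0 < v i) with hFp
  set Fn : Finset (Fin (2*d+2)) := Finset.univ.filter (fun i => v i < 0) with hFn
  set F0 : Finset (Fin (2*d+2)) := Finset.univ.filter (fun i => v i = 0) with hF0
  have hFp_le : Fp.card ≤ d := by
    rw [Finset.card_eq_sum_card_fiberwise (f := fun i => classIdx i.1)
      (t := Finset.range d) (fun i _ => Finset.mem_range.2 (classIdx_lt hd i.isLt))]
    have : ∀ c ∈ Finset.range d, (Fp.filter (fun i => classIdx i.1 = c)).card ≤ 1 := by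
      intro c hc
      refine Finset.card_le_one.2 ?_
      intro i hi j hj
      rw [Finset.mem_filter, hFp, Finset.mem_filter] at hi hj
      exact key_pos c (Finset.mem_range.1 hc) i j hi.2 hi.1.2 hj.2 hj.1.2
    calc ∑ c ∈ Finset.range d, (Fp.filter (fun i => classIdx i.1 = c)).card
        ≤ ∑ _c ∈ Finset.range d, 1 := Finset.sum_le_sum this
      _ = d := by simp
  have hFn_le : Fn.card ≤ d := by
    rw [Finset.card_eq_sum_card_fiberwise (f := fun i => classIdx i.1)
      (t := Finset.range d) (fun i _ => Finset.mem_range.2 (classIdx_lt hd i.isLt))]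
    have : ∀ c ∈ Finset.range d, (Fn.filter (fun i => classIdx i.1 = c)).card ≤ 1 := by
      intro c hc
      refine Finset.card_le_one.2 ?_
      intro i hi j hj
      rw [Finset.mem_filter, hFn, Finset.mem_filter] at hi hj
      exact key_neg c (Finset.mem_range.1 hc) i j hi.2 hi.1.2 hj.2 hj.1.2
    calc ∑ c ∈ Finset.range d, (Fn.filter (fun i => classIdx i.1 = c)).card
        ≤ ∑ _c ∈ Finset.range d, 1 := Finset.sum_le_sum this
      _ = d := by simp
  have hF0_le : F0.card ≤ d := by
    by_contra hcon
    push_neg at hcon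
    obtain ⟨S, hSsub, hScard⟩ := Finset.exists_subset_card_eq (show d+1 ≤ F0.card by omega)
    have hli := hgen S hScard
    have hmem : ∀ i : S, p i.1 ∈ LinearMap.ker (bl (d+1) α) := by
      rintro ⟨i, hi⟩
      have hmem' := hSsub hi
      rw [hF0, Finset.mem_filter] at hmem'
      exact LinearMap.mem_ker.2 hmem'.2
    have hli2 : LinearIndependent ℝ
        (fun i : S => (⟨p i.1, hmem i⟩ : LinearMap.ker (bl (d+1) α))) := by
      apply LinearIndependent.of_comp (LinearMap.ker (bl (d+1) α)).subtype
      exact hli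
    have hcard := hli2.fintype_card_le_finrank
    rw [Fintype.card_coe, hScard] at hcard
    have hψ : bl (d+1) α α ≠ 0 := ne_of_gt (bl_self_pos hα0)
    have hrange : Module.finrank ℝ (LinearMap.range (bl (d+1) α)) ≠ 0 := by
      intro h0
      rw [Submodule.finrank_eq_zero] at h0
      have hmem2 := LinearMap.mem_range_self (bl (d+1) α) α
      rw [h0] at hmem2
      exact hψ (by simpa using hmem2)
    have hrn := LinearMap.finrank_range_add_finrank_ker (bl (d+1) α)
    rw [finrank_euclideanSpace_fin] at hrn
    omega
  have hcover : (Finset.univ : Finset (Fin (2*d+2))) ⊆ Fp ∪ Fn ∪ F0 := by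
    intro i _
    rw [Finset.mem_union, Finset.mem_union, hFp, hFn, hF0,
      Finset.mem_filter, Finset.mem_filter, Finset.mem_filter]
    rcases lt_trichotomy (v i) 0 with h | h | h
    · exact Or.inl (Or.inr ⟨Finset.mem_univ _, h⟩)
    · exact Or.inr ⟨Finset.mem_univ _, h⟩
    · exact Or.inl (Or.inl ⟨Finset.mem_univ _, h⟩)
  have htotal : 2*d+2 ≤ Fp.card + Fn.card + F0.card := by
    have h1 := Finset.card_le_card hcover
    have h2 := Finset.card_union_le (Fp ∪ Fn) F0
    have h3 := Finset.card_union_le Fp Fn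
    rw [Finset.card_univ, Fintype.card_fin] at h1
    omega
  have hvs : ∀ i : Fin (2*d+2), (∑ k, α k * p i k) = v i := fun i => rfl
  refine ⟨α, hα0, ?_, ?_, ?_, ?_⟩
  · have hset : {i : Fin (2*d+2) | 0 < ∑ k, α k * p i k} = ↑Fp := by
      ext i
      rw [Set.mem_setOf_eq, hvs, Finset.coe_filter]
      simp
    rw [hset, Set.ncard_coe_finset]
    omega
  · have hset : {i : Fin (2*d+2) | ∑ k, α k * p i k < 0} = ↑Fn := by
      ext i
      rw [Set.mem_setOf_eq, hvs, Finset.coe_filter]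
      simp
    rw [hset, Set.ncard_coe_finset]
    omega
  · intro c hc
    have hss : {i : Fin (2*d+2) | classIdx (i : ℕ) = c ∧ 0 < ∑ k, α k * p i k}.Subsingleton := by
      intro i hi j hj
      rw [Set.mem_setOf_eq, hvs] at hi hj
      exact key_pos c hc i j hi.1 hi.2 hj.1 hj.2
    rcases hss.eq_empty_or_singleton with h | ⟨x, h⟩ <;> rw [h] <;> simp
  · intro c hc
    have hss : {i : Fin (2*d+2) | classIdx (i : ℕ) = c ∧ ∑ k, α k * p i k < 0}.Subsingleton := by
      intro i hi j hj
      rw [Set.mem_setOf_eq, hvs] at hi hj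
      exact key_neg c hc i j hi.1 hi.2 hj.1 hj.2
    rcases hss.eq_empty_or_singleton with h | ⟨x, h⟩ <;> rw [h] <;> simp
/-! ### main theorem -/

/-- **Ham-Sandwich step.** Let `d ≥ 3` and let `p_1, …, p_{2d+2}` be vectors
in `ℝ^(d+1)` such that every `d + 1` of them are linearly independent. Then there is a
nonzero `α ∈ ℝ^(d+1)` such that each open half-space `{x : ⟨α,x⟩ > 0}`, `{x : ⟨α,x⟩ < 0}`
contains at least two of the `p_i`, and at most one point from each class `C_i`. -/
theorem ham_sandwich_gale_step (d : ℕ) (hd : 3 ≤ d)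
    (p : Fin (2 * d + 2) → EuclideanSpace ℝ (Fin (d + 1)))
    (hgen : ∀ s : Finset (Fin (2 * d + 2)), s.card = d + 1 →
      LinearIndependent ℝ (fun i : s => p i.1)) :
    ∃ α : EuclideanSpace ℝ (Fin (d + 1)), α ≠ 0 ∧
      2 ≤ {i : Fin (2 * d + 2) | 0 < ∑ k, α k * p i k}.ncard ∧
      2 ≤ {i : Fin (2 * d + 2) | ∑ k, α k * p i k < 0}.ncard ∧
      (∀ c < d,
        {i : Fin (2 * d + 2) | classIdx (i : ℕ) = c ∧ 0 < ∑ k, α k * p i k}.ncard ≤ 1) ∧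
      (∀ c < d,
        {i : Fin (2 * d + 2) | classIdx (i : ℕ) = c ∧ ∑ k, α k * p i k < 0}.ncard ≤ 1) := by
  classical
  set a₀ := p ⟨0, by omega⟩ with ha₀
  set a₁ := p ⟨1, by omega⟩ with ha₁
  set a₂ := p ⟨2, by omega⟩ with ha₂
  set b₀ := p ⟨3, by omega⟩ with hb₀
  set b₁ := p ⟨4, by omega⟩ with hb₁
  set b₂ := p ⟨5, by omega⟩ with hb₂
  set q : Fin (d-2) → Eu (d+1) :=
    fun k => p ⟨2*k.1+6, by have := k.2; omega⟩ + p ⟨2*k.1+7, by have := k.2; omega⟩ with hq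
  set Φ : Eu (d+1) →ₗ[ℝ] (Fin (d-2) → ℝ) :=
    LinearMap.pi (fun k => (bl (d+1)).flip (q k)) with hΦdef
  set W := LinearMap.ker Φ with hWdef
  have hWrank : 3 ≤ Module.finrank ℝ W := by
    have h1 := LinearMap.finrank_range_add_finrank_ker Φ
    have h2 : Module.finrank ℝ (LinearMap.range Φ) ≤ d-2 := by
      refine le_trans (Submodule.finrank_le _) ?_
      rw [Module.finrank_fintype_fun_eq_card]
      simp
    rw [finrank_euclideanSpace_fin] at h1
    rw [← hWdef] at h1
    omega
  have hWpair : ∀ α ∈ W, ∀ (c : ℕ) (h1 : 2*c+2 < 2*d+2) (h2 : 2*c+3 < 2*d+2),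
      2 ≤ c → c < d →
      bl (d+1) α (p ⟨2*c+2, h1⟩) + bl (d+1) α (p ⟨2*c+3, h2⟩) = 0 := by
    intro α hα c hc1 hc2 hc2' hcd
    have hk : c - 2 < d - 2 := by omega
    have hcomp := congrFun (LinearMap.mem_ker.1 hα) ⟨c-2, hk⟩
    have hΦv : bl (d+1) α (q ⟨c-2, hk⟩) = 0 := by
      simpa [hΦdef, LinearMap.pi_apply] using hcomp
    rw [hq] at hΦv
    simp only at hΦv
    rw [map_add] at hΦv
    have e1 : (⟨2*(c-2)+6, by omega⟩ : Fin (2*d+2)) = ⟨2*c+2, hc1⟩ := Fin.ext (by simp; omega)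
    have e2 : (⟨2*(c-2)+7, by omega⟩ : Fin (2*d+2)) = ⟨2*c+3, hc2⟩ := Fin.ext (by simp; omega)
    rw [← e1, ← e2]
    convert hΦv using 3 <;> omega
  set bfun : Fin 3 → Eu (d+1) := ![b₀, b₁, b₂] with hbfun
  set Ψ : Eu (d+1) →ₗ[ℝ] (Fin 3 → ℝ) :=
    LinearMap.pi (fun j => (bl (d+1)).flip (bfun j)) with hΨdef
  set T : W →ₗ[ℝ] (Fin 3 → ℝ) := Ψ.comp W.subtype with hTdef
  have hTval : ∀ (u' : W) (j : Fin 3), T u' j = bl (d+1) (u' : Eu (d+1)) (bfun j) := by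
    intro u' j
    rfl
  have main : ∃ α, α ∈ W ∧ α ≠ 0 ∧
      med3 (bl (d+1) α a₀) (bl (d+1) α a₁) (bl (d+1) α a₂) = 0 ∧
      ((bl (d+1) α b₀ = 0 ∧ bl (d+1) α b₁ * bl (d+1) α b₂ ≤ 0) ∨
       (bl (d+1) α b₁ = 0 ∧ bl (d+1) α b₀ * bl (d+1) α b₂ ≤ 0) ∨
       (bl (d+1) α b₂ = 0 ∧ bl (d+1) α b₀ * bl (d+1) α b₁ ≤ 0)) := by
    by_cases hsurj : LinearMap.range T = ⊤
    · have hsurj' : Function.Surjective T := LinearMap.range_eq_top.1 hsurj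
      obtain ⟨u₀', hu₀'⟩ := hsurj' (Pi.single 0 1)
      obtain ⟨u₁', hu₁'⟩ := hsurj' (Pi.single 1 1)
      obtain ⟨u₂', hu₂'⟩ := hsurj' (Pi.single 2 1)
      have hval : ∀ (u' : W) (i j : Fin 3), T u' = Pi.single i 1 →
          bl (d+1) (u' : Eu (d+1)) (bfun j) = if i = j then 1 else 0 := by
        intro u' i j hT
        rw [← hTval u' j, hT, Pi.single_apply]
        simp [eq_comm]
      have hb0 : bfun 0 = b₀ := rfl
      have hb1 : bfun 1 = b₁ := rfl
      have hb2 : bfun 2 = b₂ := rfl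
      refine case2 W a₀ a₁ a₂ b₀ b₁ b₂ u₀' u₁' u₂' u₀'.2 u₁'.2 u₂'.2 ?_ ?_ ?_ ?_ ?_ ?_ ?_ ?_ ?_
      · have h := hval u₀' 0 0 hu₀'; rw [hb0] at h; rw [h]; simp
      · have h := hval u₀' 0 1 hu₀'; rw [hb1] at h; rw [h]; simp
      · have h := hval u₀' 0 2 hu₀'; rw [hb2] at h; rw [h]; simp
      · have h := hval u₁' 1 0 hu₁'; rw [hb0] at h; rw [h]; simp
      · have h := hval u₁' 1 1 hu₁'; rw [hb1] at h; rw [h]; simp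
      · have h := hval u₁' 1 2 hu₁'; rw [hb2] at h; rw [h]; simp
      · have h := hval u₂' 2 0 hu₂'; rw [hb0] at h; rw [h]; simp
      · have h := hval u₂' 2 1 hu₂'; rw [hb1] at h; rw [h]; simp
      · have h := hval u₂' 2 2 hu₂'; rw [hb2] at h; rw [h]; simp
    · have hlt : LinearMap.range T < ⊤ := lt_top_iff_ne_top.2 hsurj
      obtain ⟨φ, hφ0, hφbot⟩ := Submodule.exists_dual_map_eq_bot_of_lt_top hlt inferInstance
      set cc : Fin 3 → ℝ := fun j => φ (fun k => if j = k then (1:ℝ) else 0) with hcc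
      have hφeq : ∀ v : Fin 3 → ℝ, φ v = cc 0 * v 0 + cc 1 * v 1 + cc 2 * v 2 := by
        intro v
        conv_lhs => rw [pi_eq_sum_univ v]
        rw [map_sum, Fin.sum_univ_three]
        simp only [map_smul, smul_eq_mul, hcc]
        ring
      have hrelφ : ∀ u' : W, φ (T u') = 0 := by
        intro u'
        have hmem : T u' ∈ LinearMap.range T := LinearMap.mem_range_self T u'
        have : φ (T u') ∈ Submodule.map φ (LinearMap.range T) :=
          Submodule.mem_map_of_mem hmem
        rw [hφbot] at this
        simpa using this
      have hrel : ∀ u ∈ W, cc 0 * bl (d+1) u b₀ + cc 1 * bl (d+1) u b₁ +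
          cc 2 * bl (d+1) u b₂ = 0 := by
        intro u hu
        have h1 := hrelφ ⟨u, hu⟩
        rw [hφeq] at h1
        rw [hTval, hTval, hTval] at h1
        simpa [hbfun] using h1
      have hccne : ¬(cc 0 = 0 ∧ cc 1 = 0 ∧ cc 2 = 0) := by
        rintro ⟨h0, h1, h2⟩
        apply hφ0
        apply LinearMap.ext
        intro v
        rw [hφeq, h0, h1, h2]
        simp
      rcases pick hccne with ⟨hsgn, hnz⟩ | ⟨hsgn, hnz⟩ | ⟨hsgn, hnz⟩
      · obtain ⟨α, hαW, hα0, hmed, hbi, hprod⟩ :=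
          case3aux W hWrank a₀ a₁ a₂ b₀ b₁ b₂ (cc 1) (cc 2) hsgn hnz
            (fun u hu h0 => by have := hrel u hu; rw [h0] at this; linarith)
        exact ⟨α, hαW, hα0, hmed, Or.inl ⟨hbi, hprod⟩⟩
      · obtain ⟨α, hαW, hα0, hmed, hbi, hprod⟩ :=
          case3aux W hWrank a₀ a₁ a₂ b₁ b₀ b₂ (cc 0) (cc 2) hsgn hnz
            (fun u hu h0 => by have := hrel u hu; rw [h0] at this; linarith)
        exact ⟨α, hαW, hα0, hmed, Or.inr (Or.inl ⟨hbi, hprod⟩)⟩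
      · obtain ⟨α, hαW, hα0, hmed, hbi, hprod⟩ :=
          case3aux W hWrank a₀ a₁ a₂ b₂ b₀ b₁ (cc 0) (cc 1) hsgn hnz
            (fun u hu h0 => by have := hrel u hu; rw [h0] at this; linarith)
        exact ⟨α, hαW, hα0, hmed, Or.inr (Or.inr ⟨hbi, hprod⟩)⟩
  obtain ⟨α, hαW, hα0, hmed, hpat⟩ := main
  have hA := noTwo_of_med3_eq_zero hmed
  have hB : NoTwo (bl (d+1) α b₀) (bl (d+1) α b₁) (bl (d+1) α b₂) := noTwo_of_zero_mul hpat
  exact assemble d hd p hgen α hα0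
    (fun c h1 h2 hc2 hcd => hWpair α hαW c h1 h2 hc2 hcd) hA hB
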